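/- Inductive doubling estimate for the comparison integral equation: Fix L₂ < L₃, c > 0, and τ₀ > 0, set Δ = L₃ − L₂, and assume Δ > 8, c·e^{Δ/4}·τ₀²/8 ≥ 16, and c·τ₀² ≥ 1. Let f be a solution of the integral equation on [L₂,L₃]×[0,τ₀). Then (f is nondecreasing in t with f ≥ 1/2 and) for every integer n ≥ 1 and every z ∈ [L₃ − Δ·2^{−n}, L₃]: f(z, τ₀(1 − 2^{−n})) ≥ (n+1)·2^{n+2}. -/

import Mathlib

open MeasureTheory

/-- `f` is a solution of the comparison integral equation
`f(z,t) = 1/2 + c·∫₀ᵗ∫₀ˢ exp(∫_{L₂}^z f(y,r) dy) dr ds` on `[L₂,L₃] × S`. -/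
def IsSolIntEq (L₂ L₃ c : ℝ) (S : Set ℝ) (f : ℝ → ℝ → ℝ) : Prop :=
  ContinuousOn (fun p : ℝ × ℝ => f p.1 p.2) (Set.Icc L₂ L₃ ×ˢ S) ∧
  ∀ z ∈ Set.Icc L₂ L₃, ∀ t ∈ S,
    f z t = 1 / 2 + c * ∫ s in (0:ℝ)..t, ∫ r in (0:ℝ)..s, Real.exp (∫ y in L₂..z, f y r)

set_option maxHeartbeats 2000000 in
/-- **Inductive doubling estimate for the comparison integral equation.** With
`Δ = L₃ − L₂ > 8`, `c·e^{Δ/4}·τ₀²/8 ≥ 16` and `c·τ₀² ≥ 1`, a solution `f` on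
`[L₂,L₃] × [0,τ₀)` is nondecreasing in `t`, satisfies `f ≥ 1/2`, and for every `n ≥ 1`
and `z ∈ [L₃ − Δ·2⁻ⁿ, L₃]`: `f(z, τ₀(1 − 2⁻ⁿ)) ≥ (n+1)·2^{n+2}`. -/
theorem integral_equation_doubling (L₂ L₃ c τ₀ : ℝ) (hL : L₂ < L₃) (hc : 0 < c)
    (hτ₀ : 0 < τ₀) (hΔ : 8 < L₃ - L₂)
    (hbase : 16 ≤ c * Real.exp ((L₃ - L₂) / 4) * τ₀ ^ 2 / 8)
    (hcτ : 1 ≤ c * τ₀ ^ 2)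
    (f : ℝ → ℝ → ℝ) (hf : IsSolIntEq L₂ L₃ c (Set.Ico 0 τ₀) f) :
    (∀ z ∈ Set.Icc L₂ L₃,
      MonotoneOn (fun t => f z t) (Set.Ico 0 τ₀) ∧
      ∀ t ∈ Set.Ico (0:ℝ) τ₀, 1 / 2 ≤ f z t) ∧
    (∀ n : ℕ, 1 ≤ n → ∀ z, L₃ - (L₃ - L₂) / 2 ^ n ≤ z → z ≤ L₃ →
      ((n : ℝ) + 1) * 2 ^ (n + 2) ≤ f z (τ₀ * (1 - 1 / 2 ^ n))) := by
  obtain ⟨hcont, heq⟩ := hf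
  -- continuity in y for fixed r
  have hfy : ∀ r ∈ Set.Ico (0:ℝ) τ₀, ContinuousOn (fun y => f y r) (Set.Icc L₂ L₃) := by
    intro r hr
    have : ContinuousOn (fun y : ℝ => ((y, r) : ℝ × ℝ)) (Set.Icc L₂ L₃) :=
      (continuous_id.prodMk continuous_const).continuousOn
    exact hcont.comp this (fun y hy => Set.mk_mem_prod hy hr)
  -- integrability of y ↦ f y r on [a,b] ⊆ [L₂, L₃]
  have hfyint : ∀ r ∈ Set.Ico (0:ℝ) τ₀, ∀ a b, L₂ ≤ a → a ≤ b → b ≤ L₃ →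
      IntervalIntegrable (fun y => f y r) volume a b := by
    intro r hr a b ha hab hb
    refine ((hfy r hr).mono ?_).intervalIntegrable
    rw [Set.uIcc_of_le hab]
    exact Set.Icc_subset_Icc ha hb
  -- continuity of r ↦ exp (∫ y in L₂..z, f y r) on [0, T] for T < τ₀
  have hIc : ∀ z ∈ Set.Icc L₂ L₃, ∀ T, 0 ≤ T → T < τ₀ →
      ContinuousOn (fun r => Real.exp (∫ y in L₂..z, f y r)) (Set.Icc 0 T) := by
    intro z hz T hT0 hTτ
    -- Tietze extension of f from the closed rectangle
    set K : Set (ℝ × ℝ) := Set.Icc L₂ L₃ ×ˢ Set.Icc 0 T with hK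
    have hKc : IsClosed K := isClosed_Icc.prod isClosed_Icc
    have hsub : K ⊆ Set.Icc L₂ L₃ ×ˢ Set.Ico 0 τ₀ :=
      Set.prod_mono_right (Set.Icc_subset_Ico_right hTτ)
    have hrc : Continuous (K.restrict (fun p : ℝ × ℝ => f p.1 p.2)) :=
      (hcont.mono hsub).restrict
    obtain ⟨F, hF⟩ := ContinuousMap.exists_restrict_eq (Y := ℝ) hKc ⟨_, hrc⟩
    have hFf : ∀ p ∈ K, F p = f p.1 p.2 := by
      intro p hp
      have := congrFun (congrArg DFunLike.coe hF) ⟨p, hp⟩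
      exact this
    have hFc : Continuous (Function.uncurry fun r y => F (y, r)) :=
      F.continuous.comp (continuous_swap)
    have hFcont : Continuous fun r => ∫ y in L₂..z, F (y, r) :=
      intervalIntegral.continuous_parametric_intervalIntegral_of_continuous' hFc L₂ z
    refine ((Real.continuous_exp.comp hFcont).continuousOn).congr ?_
    intro r hr
    simp only [Function.comp_apply]
    congr 1
    refine intervalIntegral.integral_congr fun y hy => ?_
    rw [Set.uIcc_of_le hz.1] at hy
    exact (hFf (y, r) (Set.mk_mem_prod ⟨hy.1, le_trans hy.2 hz.2⟩ hr)).symm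
  -- integrability of the exp integrand on subintervals of [0, T]
  have hEint : ∀ z ∈ Set.Icc L₂ L₃, ∀ a b, 0 ≤ a → a ≤ b → b < τ₀ →
      IntervalIntegrable (fun r => Real.exp (∫ y in L₂..z, f y r)) volume a b := by
    intro z hz a b ha hab hb
    refine ((hIc z hz b (le_trans ha hab) hb).mono ?_).intervalIntegrable
    rw [Set.uIcc_of_le hab]
    exact Set.Icc_subset_Icc ha le_rfl
  -- G z s
  set G : ℝ → ℝ → ℝ := fun z s => ∫ r in (0:ℝ)..s, Real.exp (∫ y in L₂..z, f y r) with hG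
  have hGnn : ∀ z s, 0 ≤ s → 0 ≤ G z s := by
    intro z s hs
    exact intervalIntegral.integral_nonneg hs fun u _ => (Real.exp_pos _).le
  have hGcont : ∀ z ∈ Set.Icc L₂ L₃, ∀ T, 0 ≤ T → T < τ₀ →
      ContinuousOn (G z) (Set.Icc 0 T) := by
    intro z hz T hT0 hTτ
    have h1 : IntegrableOn (fun r => Real.exp (∫ y in L₂..z, f y r)) (Set.uIcc 0 T) volume := by
      rw [Set.uIcc_of_le hT0]
      exact (hIc z hz T hT0 hTτ).integrableOn_Icc
    have h2 := intervalIntegral.continuousOn_primitive_interval h1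
    rw [Set.uIcc_of_le hT0] at h2
    exact h2
  have hGint : ∀ z ∈ Set.Icc L₂ L₃, ∀ a b, 0 ≤ a → a ≤ b → b < τ₀ →
      IntervalIntegrable (G z) volume a b := by
    intro z hz a b ha hab hb
    refine ((hGcont z hz b (le_trans ha hab) hb).mono ?_).intervalIntegrable
    rw [Set.uIcc_of_le hab]
    exact Set.Icc_subset_Icc ha le_rfl
  -- splitting identity
  have hsplit : ∀ z ∈ Set.Icc L₂ L₃, ∀ t₁ t₂, 0 ≤ t₁ → t₁ ≤ t₂ → t₂ < τ₀ →
      f z t₂ = f z t₁ + c * ∫ s in t₁..t₂, G z s := by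
    intro z hz t₁ t₂ h0 h12 h2
    have ht₁ : t₁ ∈ Set.Ico (0:ℝ) τ₀ := ⟨h0, lt_of_le_of_lt h12 h2⟩
    have ht₂ : t₂ ∈ Set.Ico (0:ℝ) τ₀ := ⟨le_trans h0 h12, h2⟩
    rw [heq z hz t₁ ht₁, heq z hz t₂ ht₂]
    have hadd : (∫ s in (0:ℝ)..t₁, G z s) + (∫ s in t₁..t₂, G z s)
        = ∫ s in (0:ℝ)..t₂, G z s :=
      intervalIntegral.integral_add_adjacent_intervals
        (hGint z hz 0 t₁ le_rfl h0 ht₁.2) (hGint z hz t₁ t₂ h0 h12 h2)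
    rw [← hadd]
    ring
  -- monotonicity and lower bound 1/2
  have hmono : ∀ z ∈ Set.Icc L₂ L₃, MonotoneOn (fun t => f z t) (Set.Ico 0 τ₀) := by
    intro z hz t₁ ht₁ t₂ ht₂ h12
    have := hsplit z hz t₁ t₂ ht₁.1 h12 ht₂.2
    have hnn : 0 ≤ ∫ s in t₁..t₂, G z s :=
      intervalIntegral.integral_nonneg h12 fun u hu => hGnn z u (le_trans ht₁.1 hu.1)
    simp only
    nlinarith
  have hhalf : ∀ z ∈ Set.Icc L₂ L₃, ∀ t ∈ Set.Ico (0:ℝ) τ₀, 1 / 2 ≤ f z t := by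
    intro z hz t ht
    have h0 : f z 0 = 1 / 2 := by
      rw [heq z hz 0 ⟨le_rfl, hτ₀⟩]
      simp
    calc (1:ℝ)/2 = f z 0 := h0.symm
      _ ≤ f z t := hmono z hz ⟨le_rfl, hτ₀⟩ ht ht.1
  -- key lower-bound lemma
  have hkey : ∀ z ∈ Set.Icc L₂ L₃, ∀ t₁ t₂, 0 ≤ t₁ → t₁ ≤ t₂ → t₂ < τ₀ → ∀ B : ℝ,
      (∀ r ∈ Set.Icc t₁ t₂, B ≤ ∫ y in L₂..z, f y r) →
      f z t₁ + c * Real.exp B * (t₂ - t₁) ^ 2 / 2 ≤ f z t₂ := by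
    intro z hz t₁ t₂ h0 h12 h2 B hB
    rw [hsplit z hz t₁ t₂ h0 h12 h2]
    have hGlb : ∀ s ∈ Set.Icc t₁ t₂, Real.exp B * (s - t₁) ≤ G z s := by
      intro s hs
      have hsτ : s < τ₀ := lt_of_le_of_lt hs.2 h2
      have hadd : (∫ r in (0:ℝ)..t₁, Real.exp (∫ y in L₂..z, f y r))
          + (∫ r in t₁..s, Real.exp (∫ y in L₂..z, f y r)) = G z s :=
        intervalIntegral.integral_add_adjacent_intervals
          (hEint z hz 0 t₁ le_rfl h0 (lt_of_le_of_lt h12 h2))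
          (hEint z hz t₁ s h0 hs.1 hsτ)
      have h1 : 0 ≤ ∫ r in (0:ℝ)..t₁, Real.exp (∫ y in L₂..z, f y r) :=
        intervalIntegral.integral_nonneg h0 fun u _ => (Real.exp_pos _).le
      have h2' : Real.exp B * (s - t₁) ≤ ∫ r in t₁..s, Real.exp (∫ y in L₂..z, f y r) := by
        have : (∫ r in t₁..s, Real.exp B) ≤ ∫ r in t₁..s, Real.exp (∫ y in L₂..z, f y r) := by
          refine intervalIntegral.integral_mono_on hs.1
            intervalIntegrable_const (hEint z hz t₁ s h0 hs.1 hsτ) fun r hr => ?_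
          exact Real.exp_le_exp.mpr (hB r ⟨hr.1, le_trans hr.2 hs.2⟩)
        rw [intervalIntegral.integral_const] at this
        calc Real.exp B * (s - t₁) = (s - t₁) • Real.exp B := by
              simp [smul_eq_mul]; ring
          _ ≤ _ := this
      linarith
    have houter : (∫ s in t₁..t₂, Real.exp B * (s - t₁)) ≤ ∫ s in t₁..t₂, G z s := by
      refine intervalIntegral.integral_mono_on h12 ?_ (hGint z hz t₁ t₂ h0 h12 h2) hGlb
      exact ((continuous_const.mul (continuous_id.sub continuous_const)).intervalIntegrable t₁ t₂)
    have hval : (∫ s in t₁..t₂, Real.exp B * (s - t₁)) = Real.exp B * (t₂ - t₁) ^ 2 / 2 := by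
      rw [intervalIntegral.integral_const_mul]
      have : (∫ s in t₁..t₂, (s - t₁)) = (t₂ - t₁) ^ 2 / 2 := by
        have := intervalIntegral.integral_comp_sub_right (fun x => x) t₁ (a := t₁) (b := t₂)
        rw [this, integral_id]
        ring_nf
      rw [this]; ring
    nlinarith [houter, hval, hc]
  -- numeric preliminaries
  have hΔ0 : (0:ℝ) < L₃ - L₂ := by linarith
  have hp : ∀ j : ℕ, (0:ℝ) < (2:ℝ)^j := fun j => by positivity
  have hple : ∀ j : ℕ, 1/(2:ℝ)^j ≤ 1 := fun j => by
    rw [div_le_one (hp j)]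
    exact one_le_pow₀ (by norm_num)
  have hdivle : ∀ j : ℕ, (L₃-L₂)/2^j ≤ (L₃-L₂) := fun j => by
    rw [div_le_iff₀ (hp j)]
    nlinarith [hp j, one_le_pow₀ (a := (2:ℝ)) (n := j) (by norm_num)]
  have hhalfdiv : ∀ j : ℕ, (L₃-L₂)/2^(j+1) ≤ (L₃-L₂)/2^j := fun j => by
    gcongr <;> first | exact hΔ0.le | omega | norm_num
  have hT0 : ∀ j : ℕ, 0 ≤ τ₀ * (1 - 1/2^j) := fun j => by nlinarith [hple j, hτ₀.le, hτ₀]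
  have hTlt : ∀ j : ℕ, τ₀ * (1 - 1/2^j) < τ₀ := fun j => by
    nlinarith [mul_pos hτ₀ (one_div_pos.mpr (hp j))]
  have hmemT : ∀ j : ℕ, τ₀ * (1 - 1/2^j) ∈ Set.Ico (0:ℝ) τ₀ := fun j => ⟨hT0 j, hTlt j⟩
  have hTmono : ∀ j : ℕ, τ₀ * (1 - 1/2^(j+1)) - τ₀ * (1 - 1/2^j) = τ₀/2^(j+1) := fun j => by
    rw [pow_succ]
    field_simp
    ring
  -- the main induction (shifted index)
  have main : ∀ n : ℕ, ∀ z, L₃ - (L₃ - L₂) / 2 ^ (n+1) ≤ z → z ≤ L₃ →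
      ((n : ℝ) + 2) * 2 ^ (n + 3) ≤ f z (τ₀ * (1 - 1 / 2 ^ (n+1))) := by
    intro n
    induction n with
    | zero =>
      intro z hz1 hz2
      have hzI : z ∈ Set.Icc L₂ L₃ := ⟨by linarith [hhalfdiv 0, hdivle 0], hz2⟩
      have hB : ∀ r ∈ Set.Icc (0:ℝ) (τ₀ * (1 - 1/2^(1:ℕ))),
          (L₃ - L₂)/4 ≤ ∫ y in L₂..z, f y r := by
        intro r hr
        have hrI : r ∈ Set.Ico (0:ℝ) τ₀ := ⟨hr.1, lt_of_le_of_lt hr.2 (hTlt 1)⟩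
        have hmon := intervalIntegral.integral_mono_on (f := fun _ => (1:ℝ)/2)
          (g := fun y => f y r) hzI.1 intervalIntegrable_const
          (hfyint r hrI L₂ z le_rfl hzI.1 hzI.2)
          (fun y hy => hhalf y ⟨hy.1, le_trans hy.2 hzI.2⟩ r hrI)
        rw [intervalIntegral.integral_const] at hmon
        have hzd : (L₃ - L₂)/2 ≤ z - L₂ := by
          have h1 := hz1
          rw [pow_one] at h1
          linarith
        simp only [smul_eq_mul] at hmon
        linarith
      have hk2 := hkey z hzI 0 (τ₀ * (1 - 1/2^(1:ℕ))) le_rfl (hT0 1) (hTlt 1)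
        ((L₃ - L₂)/4) hB
      have h0 : 1/2 ≤ f z 0 := hhalf z hzI 0 ⟨le_rfl, hτ₀⟩
      have hTv : τ₀ * (1 - 1/2^(1:ℕ)) = τ₀ / 2 := by norm_num; ring
      rw [hTv] at hk2
      have hfin : (16:ℝ) ≤ f z (τ₀/2) := by nlinarith [hk2, h0, hbase, hc.le]
      have : τ₀ * (1 - 1/2^(0+1)) = τ₀/2 := by norm_num; ring
      rw [this]
      push_cast
      norm_num
      linarith [hfin]
    | succ n ih =>
      intro z hz1 hz2
      -- w is the left endpoint of the previous window
      set w : ℝ := L₃ - (L₃ - L₂)/2^(n+1) with hw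
      have hz1' : L₃ - (L₃ - L₂)/2^(n+2) ≤ z := hz1
      have hwz : w ≤ z := by
        have := hhalfdiv (n+1)
        simp only [hw]
        linarith
      have hwL2 : L₂ ≤ w := by
        have := hdivle (n+1)
        simp only [hw]
        linarith
      have hwL3 : w ≤ L₃ := by
        have h1 : 0 ≤ (L₃ - L₂)/2^(n+1) := by positivity
        simp only [hw]; linarith
      have hzI : z ∈ Set.Icc L₂ L₃ := ⟨le_trans hwL2 hwz, hz2⟩
      -- abbreviations
      have hT12 : τ₀ * (1 - 1/2^(n+1)) ≤ τ₀ * (1 - 1/2^(n+2)) := by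
        have h := hTmono (n+1)
        have h2 : 0 ≤ τ₀/2^(n+2) := by positivity
        linarith
      have hzw : (L₃ - L₂)/2^(n+2) ≤ z - w := by
        have he : (L₃ - L₂)/2^(n+1) = 2*((L₃ - L₂)/2^(n+2)) := by
          rw [pow_succ]
          field_simp
          ring
        simp only [hw]
        linarith
      have ha0 : (0:ℝ) ≤ ((n:ℝ)+2) * 2^(n+3) := by positivity
      -- lower bound on the inner integral
      have hB : ∀ r ∈ Set.Icc (τ₀ * (1 - 1/2^(n+1))) (τ₀ * (1 - 1/2^(n+2))),
          (((n:ℝ)+2) * 2^(n+3)) * ((L₃ - L₂)/2^(n+2)) ≤ ∫ y in L₂..z, f y r := by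
        intro r hr
        have hrI : r ∈ Set.Ico (0:ℝ) τ₀ :=
          ⟨le_trans (hT0 (n+1)) hr.1, lt_of_le_of_lt hr.2 (hTlt (n+2))⟩
        have hadd : (∫ y in L₂..w, f y r) + (∫ y in w..z, f y r) = ∫ y in L₂..z, f y r :=
          intervalIntegral.integral_add_adjacent_intervals
            (hfyint r hrI L₂ w le_rfl hwL2 hwL3)
            (hfyint r hrI w z hwL2 hwz hz2)
        have h1 : 0 ≤ ∫ y in L₂..w, f y r :=
          intervalIntegral.integral_nonneg hwL2 fun y hy =>
            le_trans (by norm_num) (hhalf y ⟨hy.1, le_trans hy.2 hwL3⟩ r hrI)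
        have h2 : (((n:ℝ)+2) * 2^(n+3)) * (z - w) ≤ ∫ y in w..z, f y r := by
          have hmon := intervalIntegral.integral_mono_on
            (f := fun _ => ((n:ℝ)+2) * 2^(n+3)) (g := fun y => f y r) hwz
            intervalIntegrable_const (hfyint r hrI w z hwL2 hwz hz2) ?_
          · rw [intervalIntegral.integral_const] at hmon
            simp only [smul_eq_mul] at hmon
            linarith [hmon]
          · intro y hy
            have hyI : y ∈ Set.Icc L₂ L₃ := ⟨le_trans hwL2 hy.1, le_trans hy.2 hz2⟩
            have hih := ih y (by simpa [hw] using hy.1) hyI.2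
            have hmo := hmono y hyI (hmemT (n+1)) hrI hr.1
            exact le_trans hih hmo
        have h3 : (((n:ℝ)+2) * 2^(n+3)) * ((L₃ - L₂)/2^(n+2))
            ≤ (((n:ℝ)+2) * 2^(n+3)) * (z - w) :=
          mul_le_mul_of_nonneg_left hzw ha0
        calc (((n:ℝ)+2) * 2^(n+3)) * ((L₃ - L₂)/2^(n+2))
            ≤ (((n:ℝ)+2) * 2^(n+3)) * (z - w) := h3
          _ ≤ ∫ y in w..z, f y r := h2
          _ ≤ ∫ y in L₂..z, f y r := by linarith [hadd, h1]
      have hk2 := hkey z hzI (τ₀ * (1 - 1/2^(n+1))) (τ₀ * (1 - 1/2^(n+2)))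
        (hT0 (n+1)) hT12 (hTlt (n+2)) _ hB
      have hfT1 : ((n:ℝ)+2) * 2^(n+3) ≤ f z (τ₀ * (1 - 1/2^(n+1))) := by
        have := hhalfdiv (n+1)
        exact ih z (by linarith) hz2
      -- exponential estimate
      set B : ℝ := (((n:ℝ)+2) * 2^(n+3)) * ((L₃ - L₂)/2^(n+2)) with hBdef
      have hBval : B = ((n:ℝ)+2) * 2 * (L₃ - L₂) := by
        simp only [hBdef, pow_succ]
        field_simp
      have hn0 : (0:ℝ) ≤ (n:ℝ) := Nat.cast_nonneg n
      have hBge : 16*((n:ℝ)+2) ≤ B := by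
        rw [hBval]
        nlinarith [hn0, hΔ]
      have h2e : (2:ℝ) ≤ Real.exp 1 := by nlinarith [Real.add_one_le_exp 1]
      have hpe : (2:ℝ)^(3*n+9) ≤ Real.exp (3*(n:ℝ)+9) := by
        calc (2:ℝ)^(3*n+9) ≤ (Real.exp 1)^(3*n+9) :=
              pow_le_pow_left₀ (by norm_num) h2e _
          _ = Real.exp (((3*n+9 : ℕ) : ℝ)) := by
              rw [← Real.exp_nat_mul]
              norm_num
          _ = Real.exp (3*(n:ℝ)+9) := by push_cast; ring_nf
      have hne : ((n:ℝ)+3) ≤ Real.exp ((n:ℝ)+2) := by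
        nlinarith [Real.add_one_le_exp ((n:ℝ)+2)]
      have hEB : ((n:ℝ)+3) * 2^(n+4) * (2*((2:ℝ)^(n+2))^2) ≤ Real.exp B := by
        calc ((n:ℝ)+3) * 2^(n+4) * (2*((2:ℝ)^(n+2))^2)
            = ((n:ℝ)+3) * 2^(3*n+9) := by ring
          _ ≤ Real.exp ((n:ℝ)+2) * Real.exp (3*(n:ℝ)+9) :=
              mul_le_mul hne hpe (by positivity) (Real.exp_pos _).le
          _ = Real.exp (4*(n:ℝ)+11) := by rw [← Real.exp_add]; ring_nf
          _ ≤ Real.exp B := Real.exp_le_exp.mpr (by nlinarith [hBge, hn0])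
      -- put it together
      have hq : (0:ℝ) < 2*((2:ℝ)^(n+2))^2 := by positivity
      have hd : τ₀ * (1 - 1/2^(n+2)) - τ₀ * (1 - 1/2^(n+1)) = τ₀/2^(n+2) := hTmono (n+1)
      have hrw : c * Real.exp B * (τ₀ * (1 - 1/2^(n+2)) - τ₀ * (1 - 1/2^(n+1)))^2 / 2
          = (c * τ₀^2) * Real.exp B / (2*((2:ℝ)^(n+2))^2) := by
        rw [hd]
        field_simp
      have h1 : ((n:ℝ)+3) * 2^(n+4) ≤ Real.exp B / (2*((2:ℝ)^(n+2))^2) := by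
        rw [le_div_iff₀ hq]
        linarith [hEB]
      have h2 : Real.exp B / (2*((2:ℝ)^(n+2))^2)
          ≤ (c * τ₀^2) * Real.exp B / (2*((2:ℝ)^(n+2))^2) := by
        refine (div_le_div_iff_of_pos_right hq).mpr ?_
        nlinarith [Real.exp_pos B, hcτ]
      rw [hrw] at hk2
      push_cast
      have hee : ((n:ℕ)+1) + 3 = n + 4 := by omega
      rw [hee]
      have hfT1' : (0:ℝ) ≤ f z (τ₀ * (1 - 1/2^(n+1))) := le_trans ha0 hfT1
      have : ((n:ℝ)+1+2) = ((n:ℝ)+3) := by ring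
      rw [this]
      linarith [hk2, h1, h2, hfT1']
  refine ⟨fun z hz => ⟨hmono z hz, hhalf z hz⟩, ?_⟩
  intro n hn z hz1 hz2
  obtain ⟨m, rfl⟩ : ∃ m, n = m + 1 := ⟨n - 1, by omega⟩
  have h := main m z hz1 hz2
  push_cast at h ⊢
  have hexp : ((m:ℕ) + 1 + 2) = m + 3 := by omega
  rw [hexp]
  linarith [h]
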